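/- Let v be a transferable-utility coalitional game on the player set I = {1,…,N} with N ≥ 1, and let m̂_1,…,m̂_N ∈ ℝ^I be its marginal contribution vectors. Then the Shapley value φ(v) is the unique global minimizer over ℝ^I of the function F(x) = (1/2) Σ_{i∈I} ‖x − m̂_i‖², where ‖·‖ is the Euclidean norm. -/

import Mathlib

/-- The set of predecessors of player `j` in the ordering `σ`
(`σ p` is the player occupying position `p`). -/
def preds {N : ℕ} (σ : Equiv.Perm (Fin N)) (j : Fin N) : Finset (Fin N) :=
  Finset.univ.filter fun i => σ.symm i < σ.symm j

/-- The incremental marginal contribution vector of the ordering `σ`: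
`(m_σ)_j = v(P_j^σ ∪ {j}) − v(P_j^σ)`. -/
noncomputable def margVec {N : ℕ} (v : Finset (Fin N) → ℝ) (σ : Equiv.Perm (Fin N))
    (j : Fin N) : ℝ :=
  v (preds σ j ∪ {j}) - v (preds σ j)

/-- The Shapley value `φ_j(v) = (1/N!) Σ_σ (v(P_j^σ ∪ {j}) − v(P_j^σ))`. -/
noncomputable def shapley {N : ℕ} (v : Finset (Fin N) → ℝ) (j : Fin N) : ℝ :=
  (1 / (N.factorial : ℝ)) * ∑ σ : Equiv.Perm (Fin N), margVec v σ j

/-- The marginal contribution vector of agent `i`: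
`m̂_i = (1/(N−1)!) Σ_{σ ∈ π_i} m_σ`, where `π_i` is the set of orderings in which
agent `i` occupies the first position. -/
noncomputable def mhat {N : ℕ} (hN : 0 < N) (v : Finset (Fin N) → ℝ) (i : Fin N)
    (j : Fin N) : ℝ :=
  (1 / ((N - 1).factorial : ℝ)) *
    ∑ σ ∈ Finset.univ.filter (fun σ : Equiv.Perm (Fin N) => σ ⟨0, hN⟩ = i), margVec v σ j

/-- The objective `F(x) = (1/2) Σ_{i∈I} ‖x − m̂_i‖²` (Euclidean norm). -/
noncomputable def Fobj {N : ℕ} (hN : 0 < N) (v : Finset (Fin N) → ℝ)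
    (x : EuclideanSpace ℝ (Fin N)) : ℝ :=
  (1 / 2 : ℝ) * ∑ i : Fin N,
    ‖x - (WithLp.equiv 2 (Fin N → ℝ)).symm (fun j => mhat hN v i j)‖ ^ 2

/-- the Shapley value is the unique global minimizer of
`F(x) = (1/2) Σ_i ‖x − m̂_i‖²`. -/
theorem stmt_8 (N : ℕ) (hN : 0 < N) (v : Finset (Fin N) → ℝ) (hv : v ∅ = 0) :
    (∀ x, Fobj hN v ((WithLp.equiv 2 (Fin N → ℝ)).symm (fun j => shapley v j)) ≤ Fobj hN v x) ∧
    (∀ x, (∀ y, Fobj hN v x ≤ Fobj hN v y) →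
      x = (WithLp.equiv 2 (Fin N → ℝ)).symm (fun j => shapley v j)) := by
  classical
  set c : EuclideanSpace ℝ (Fin N) := (WithLp.equiv 2 (Fin N → ℝ)).symm (fun j => shapley v j)
    with hc
  set m : Fin N → EuclideanSpace ℝ (Fin N) :=
    fun i => (WithLp.equiv 2 (Fin N → ℝ)).symm (fun j => mhat hN v i j) with hm
  have hfac : (N.factorial : ℝ) = N * (N - 1).factorial := by
    cases N with
    | zero => omega
    | succ n => simp [Nat.factorial_succ]
  have hfacne : ((N - 1).factorial : ℝ) ≠ 0 := by positivity
  have hNne : (N : ℝ) ≠ 0 := by positivity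
  have hkey : ∀ j, ∑ i : Fin N, mhat hN v i j = (N : ℝ) * shapley v j := by
    intro j
    unfold mhat shapley
    rw [← Finset.mul_sum,
      Finset.sum_fiberwise_of_maps_to (t := Finset.univ)
        (g := fun σ : Equiv.Perm (Fin N) => σ ⟨0, hN⟩) (fun _ _ => Finset.mem_univ _)
        (fun σ => margVec v σ j)]
    field_simp
    rw [hfac]; ring
  have hsum : ∑ i : Fin N, m i = (N : ℝ) • c := by
    ext j
    have h1 : (∑ i : Fin N, m i) j = ∑ i : Fin N, m i j := by
      rw [WithLp.ofLp_sum]; exact Finset.sum_apply j Finset.univ _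
    rw [h1]
    have h2 : ((N : ℝ) • c) j = (N : ℝ) * c j := rfl
    rw [h2]
    exact hkey j
  have hzero : ∀ x : EuclideanSpace ℝ (Fin N),
      ∑ i : Fin N, (inner ℝ (x - c) (c - m i) : ℝ) = 0 := by
    intro x
    rw [← inner_sum]
    have : ∑ i : Fin N, (c - m i) = 0 := by
      rw [Finset.sum_sub_distrib, hsum, Finset.sum_const, Finset.card_univ,
        Fintype.card_fin, ← Nat.cast_smul_eq_nsmul ℝ, sub_self]
    rw [this, inner_zero_right]
  have hdecomp : ∀ x, Fobj hN v x = Fobj hN v c + ((N : ℝ) / 2) * ‖x - c‖ ^ 2 := by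
    intro x
    unfold Fobj
    have hterm : ∀ i : Fin N,
        ‖x - m i‖ ^ 2 = ‖x - c‖ ^ 2 + 2 * (inner ℝ (x - c) (c - m i) : ℝ) + ‖c - m i‖ ^ 2 := by
      intro i
      have : x - m i = (x - c) + (c - m i) := by abel
      rw [this, norm_add_sq_real]
    calc (1 / 2 : ℝ) * ∑ i : Fin N, ‖x - m i‖ ^ 2
        = (1 / 2 : ℝ) * ∑ i : Fin N,
            (‖x - c‖ ^ 2 + 2 * (inner ℝ (x - c) (c - m i) : ℝ) + ‖c - m i‖ ^ 2) := by
          congr 1; exact Finset.sum_congr rfl fun i _ => hterm i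
      _ = (1 / 2 : ℝ) * (∑ i : Fin N, ‖c - m i‖ ^ 2) + ((N : ℝ) / 2) * ‖x - c‖ ^ 2 := by
          rw [Finset.sum_add_distrib, Finset.sum_add_distrib, ← Finset.mul_sum, hzero,
            Finset.sum_const, Finset.card_univ, Fintype.card_fin, nsmul_eq_mul]
          ring
      _ = (1 / 2 : ℝ) * ∑ i : Fin N, ‖c - m i‖ ^ 2 + ((N : ℝ) / 2) * ‖x - c‖ ^ 2 := by ring
  constructor
  · intro x
    rw [hdecomp x]
    have : (0 : ℝ) ≤ ((N : ℝ) / 2) * ‖x - c‖ ^ 2 := by positivity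
    linarith
  · intro x hx
    have h1 := hx c
    rw [hdecomp x] at h1
    have h2 : ((N : ℝ) / 2) * ‖x - c‖ ^ 2 ≤ 0 := by linarith
    have h3 : (0 : ℝ) < (N : ℝ) / 2 := by positivity
    have h4 : ‖x - c‖ ^ 2 ≤ 0 := by nlinarith
    have h5 : ‖x - c‖ = 0 := by nlinarith [norm_nonneg (x - c), sq_nonneg ‖x - c‖]
    have := norm_eq_zero.mp h5
    have : x = c := by rwa [sub_eq_zero] at this
    exact this
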